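/- For λ ∈ (−1/2, ∞), x ≥ 0, and 0 < r ≤ R < ∞, the Bessel measure μ_λ with density t^{2λ} dt on [0,∞) satisfies (R/r)^{1−2λ_−} ≲ μ_λ(B(x,R))/μ_λ(B(x,r)) ≲ (R/r)^{1+2λ_+}, where λ_+ = max(λ,0) and λ_− = max(−λ,0), with implied constants depending only on λ. -/

import Mathlib

open Set MeasureTheory

lemma bessel_integrableOn (b : ℝ) (hb : -1 < b) {p q : ℝ} :
    IntegrableOn (fun t : ℝ => t ^ b) (Set.Ioo p q) := by
  rcases le_or_gt p q with h | h
  · have := intervalIntegral.intervalIntegrable_rpow' (a := p) (b := q) hb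
    rw [intervalIntegrable_iff_integrableOn_Ioo_of_le h] at this
    exact this
  · simp [Ioo_eq_empty (not_lt.mpr h.le), IntegrableOn]

lemma bessel_int_le_const (b : ℝ) (hb : -1 < b) {p q M : ℝ} (hpq : p ≤ q)
    (hM : ∀ t ∈ Set.Ioo p q, t ^ b ≤ M) :
    ∫ t in Set.Ioo p q, t ^ b ≤ M * (q - p) := by
  have h1 : IntegrableOn (fun t : ℝ => t ^ b) (Set.Ioo p q) := bessel_integrableOn b hb
  have h2 : IntegrableOn (fun _ : ℝ => M) (Set.Ioo p q) := by
    refine integrableOn_const ?_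
    simp [Real.volume_Ioo]
  calc ∫ t in Set.Ioo p q, t ^ b ≤ ∫ _ in Set.Ioo p q, M :=
        setIntegral_mono_on h1 h2 measurableSet_Ioo hM
    _ = M * (q - p) := by
        rw [setIntegral_const, measureReal_def, Real.volume_Ioo, ENNReal.toReal_ofReal (by linarith)]
        rw [smul_eq_mul]; ring

lemma bessel_const_le_int (b : ℝ) (hb : -1 < b) {p q M : ℝ} (hpq : p ≤ q)
    (hM : ∀ t ∈ Set.Ioo p q, M ≤ t ^ b) :
    M * (q - p) ≤ ∫ t in Set.Ioo p q, t ^ b := by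
  have h1 : IntegrableOn (fun t : ℝ => t ^ b) (Set.Ioo p q) := bessel_integrableOn b hb
  have h2 : IntegrableOn (fun _ : ℝ => M) (Set.Ioo p q) := by
    refine integrableOn_const ?_
    simp [Real.volume_Ioo]
  calc M * (q - p) = ∫ _ in Set.Ioo p q, M := by
        rw [setIntegral_const, measureReal_def, Real.volume_Ioo, ENNReal.toReal_ofReal (by linarith)]
        rw [smul_eq_mul]; ring
    _ ≤ ∫ t in Set.Ioo p q, t ^ b := setIntegral_mono_on h2 h1 measurableSet_Ioo hM

lemma bessel_low (b x r : ℝ) (hb : -1 < b) (hx : 0 ≤ x) (hr : 0 < r) :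
    (2:ℝ) ^ (-(b+1)) * (r * (x+r) ^ b) ≤ ∫ t in Set.Ioo (max (x-r) 0) (x+r), t ^ b := by
  set m := max (x - r) 0 with hm
  have hm0 : 0 ≤ m := le_max_right _ _
  have hmx : m ≤ x := max_le (by linarith) hx
  have hT : 0 < x + r := by linarith
  have hlen : r ≤ (x + r) - m := by
    rcases le_or_gt (x - r) 0 with h | h
    · rw [hm, max_eq_right h]; linarith
    · rw [hm, max_eq_left h.le]; linarith
  rcases le_or_gt b 0 with hb0 | hb0
  · -- decreasing integrand
    have key : (x+r) ^ b * ((x+r) - m) ≤ ∫ t in Set.Ioo m (x+r), t ^ b := by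
      apply bessel_const_le_int b hb (by linarith)
      intro t ht
      exact Real.rpow_le_rpow_of_nonpos (lt_of_le_of_lt hm0 ht.1) ht.2.le hb0
    have h2 : (2:ℝ) ^ (-(b+1)) ≤ 1 :=
      Real.rpow_le_one_of_one_le_of_nonpos one_le_two (by linarith)
    have hTb : (0:ℝ) ≤ (x+r) ^ b := Real.rpow_nonneg hT.le _
    have h3 : (2:ℝ) ^ (-(b+1)) * (r * (x+r) ^ b) ≤ r * (x+r) ^ b :=
      mul_le_of_le_one_left (mul_nonneg hr.le hTb) h2
    have h4 : r * (x+r) ^ b ≤ (x+r) ^ b * ((x+r) - m) := by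
      have := mul_le_mul_of_nonneg_left hlen hTb
      linarith [this]
    linarith
  · -- increasing integrand: restrict to upper half
    set mid := (m + (x + r)) / 2 with hmid
    have hmid1 : m < mid := by simp only [hmid]; linarith
    have hmid2 : mid < x + r := by simp only [hmid]; linarith
    have hmidpos : (x + r) / 2 ≤ mid := by simp only [hmid]; linarith
    have step1 : ∫ t in Set.Ioo mid (x+r), t ^ b ≤ ∫ t in Set.Ioo m (x+r), t ^ b := by
      apply setIntegral_mono_set (bessel_integrableOn b hb)
      · filter_upwards [ae_restrict_mem measurableSet_Ioo] with t ht
        exact Real.rpow_nonneg (le_of_lt (lt_of_le_of_lt hm0 ht.1)) _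
      · exact HasSubset.Subset.eventuallyLE (Set.Ioo_subset_Ioo (le_of_lt hmid1) le_rfl)
    have step2 : ((x+r)/2) ^ b * ((x+r) - mid) ≤ ∫ t in Set.Ioo mid (x+r), t ^ b := by
      apply bessel_const_le_int b hb (by linarith)
      intro t ht
      exact Real.rpow_le_rpow (by linarith) (le_of_lt (lt_of_le_of_lt hmidpos ht.1)) hb0.le
    have hhalf : r / 2 ≤ (x + r) - mid := by simp only [hmid]; linarith
    have hc : (2:ℝ) ^ (-(b+1)) * (r * (x+r) ^ b) ≤ ((x+r)/2) ^ b * ((x+r) - mid) := by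
      have e1 : ((x+r)/2 : ℝ) ^ b = (x+r) ^ b / 2 ^ b := Real.div_rpow hT.le (by norm_num : (0:ℝ) ≤ 2) b
      have e2 : (2:ℝ) ^ (-(b+1)) = 1 / 2 ^ b / 2 := by
        rw [Real.rpow_neg (by norm_num), Real.rpow_add (by norm_num : (0:ℝ) < 2),
          Real.rpow_one]
        field_simp
      have h2b : (0:ℝ) < 2 ^ b := Real.rpow_pos_of_pos (by norm_num) _
      have hTb : (0:ℝ) ≤ (x+r) ^ b := Real.rpow_nonneg hT.le _
      rw [e1, e2]
      calc 1 / 2 ^ b / 2 * (r * (x+r) ^ b) = ((x+r) ^ b / 2 ^ b) * (r / 2) := by ring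
        _ ≤ ((x+r) ^ b / 2 ^ b) * ((x+r) - mid) := by
            exact mul_le_mul_of_nonneg_left hhalf (div_nonneg hTb h2b.le)
        _ = (x+r) ^ b / 2 ^ b * ((x+r) - mid) := by ring
    calc (2:ℝ) ^ (-(b+1)) * (r * (x+r) ^ b) ≤ ((x+r)/2) ^ b * ((x+r) - mid) := hc
      _ ≤ ∫ t in Set.Ioo mid (x+r), t ^ b := step2
      _ ≤ ∫ t in Set.Ioo m (x+r), t ^ b := step1

lemma bessel_up (b x r : ℝ) (hb : -1 < b) (hx : 0 ≤ x) (hr : 0 < r) :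
    ∫ t in Set.Ioo (max (x-r) 0) (x+r), t ^ b ≤ (max 2 (6 + 3/(b+1))) * (r * (x+r) ^ b) := by
  set m := max (x - r) 0 with hm
  have hm0 : 0 ≤ m := le_max_right _ _
  have hmx : m ≤ x := max_le (by linarith) hx
  have hT : 0 < x + r := by linarith
  have hb1 : 0 < b + 1 := by linarith
  have hTb : (0:ℝ) ≤ (x+r) ^ b := Real.rpow_nonneg hT.le _
  have hlen : (x + r) - m ≤ 2 * r := by
    rcases le_or_gt (x - r) 0 with h | h
    · rw [hm, max_eq_right h]; linarith
    · rw [hm, max_eq_left h.le]; linarith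
  rcases le_or_gt 0 b with hb0 | hb0
  · -- increasing integrand
    have key : ∫ t in Set.Ioo m (x+r), t ^ b ≤ (x+r) ^ b * ((x+r) - m) := by
      apply bessel_int_le_const b hb (by linarith)
      intro t ht
      exact Real.rpow_le_rpow (le_of_lt (lt_of_le_of_lt hm0 ht.1)) ht.2.le hb0
    have h2 : (x+r) ^ b * ((x+r) - m) ≤ 2 * (r * (x+r) ^ b) := by
      have := mul_le_mul_of_nonneg_left hlen hTb
      linarith
    have h3 : (2:ℝ) ≤ max 2 (6 + 3/(b+1)) := le_max_left _ _
    have h4 : (0:ℝ) ≤ r * (x+r) ^ b := mul_nonneg hr.le hTb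
    nlinarith
  · -- decreasing integrand, two subcases
    have hC : (6 + 3/(b+1) : ℝ) ≤ max 2 (6 + 3/(b+1)) := le_max_right _ _
    have h4 : (0:ℝ) ≤ r * (x+r) ^ b := mul_nonneg hr.le hTb
    rcases le_or_gt x (2*r) with hx2 | hx2
    · -- x ≤ 2r : compare with integral over (0, x+r)
      have step1 : ∫ t in Set.Ioo m (x+r), t ^ b ≤ ∫ t in Set.Ioo 0 (x+r), t ^ b := by
        apply setIntegral_mono_set (bessel_integrableOn b hb)
        · filter_upwards [ae_restrict_mem measurableSet_Ioo] with t ht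
          exact Real.rpow_nonneg ht.1.le _
        · exact HasSubset.Subset.eventuallyLE (Set.Ioo_subset_Ioo hm0 le_rfl)
      have step2 : ∫ t in Set.Ioo 0 (x+r), t ^ b = (x+r) ^ (b+1) / (b+1) := by
        rw [← MeasureTheory.integral_Ioc_eq_integral_Ioo,
          ← intervalIntegral.integral_of_le hT.le,
          integral_rpow (Or.inl hb)]
        rw [Real.zero_rpow (by linarith : b + 1 ≠ 0)]
        ring
      have step3 : (x+r) ^ (b+1) = (x+r) ^ b * (x+r) := by
        rw [Real.rpow_add hT, Real.rpow_one]
      have step4 : (x+r) ^ (b+1) / (b+1) ≤ (3/(b+1)) * (r * (x+r) ^ b) := by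
        rw [step3]
        rw [div_le_iff₀ hb1]
        have hT3 : x + r ≤ 3 * r := by linarith
        calc (x+r) ^ b * (x+r) ≤ (x+r) ^ b * (3*r) := mul_le_mul_of_nonneg_left hT3 hTb
          _ = 3/(b+1) * (r * (x+r) ^ b) * (b+1) := by field_simp
      calc ∫ t in Set.Ioo m (x+r), t ^ b ≤ (x+r) ^ (b+1) / (b+1) := step2 ▸ step1
        _ ≤ (3/(b+1)) * (r * (x+r) ^ b) := step4
        _ ≤ (max 2 (6 + 3/(b+1))) * (r * (x+r) ^ b) := by
            apply mul_le_mul_of_nonneg_right _ h4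
            have : (0:ℝ) < 3/(b+1) := by positivity
            calc (3/(b+1) : ℝ) ≤ 6 + 3/(b+1) := by linarith
              _ ≤ _ := hC
    · -- x > 2r : m = x - r > 0, integrand ≤ m^b ≤ 3 (x+r)^b
      have hmx' : m = x - r := by rw [hm, max_eq_left (by linarith)]
      have hmpos : 0 < m := by rw [hmx']; linarith
      have key : ∫ t in Set.Ioo m (x+r), t ^ b ≤ m ^ b * ((x+r) - m) := by
        apply bessel_int_le_const b hb (by linarith)
        intro t ht
        exact Real.rpow_le_rpow_of_nonpos hmpos ht.1.le hb0.le
      have h5 : (x+r)/3 ≤ m := by rw [hmx']; linarith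
      have h6 : m ^ b ≤ ((x+r)/3) ^ b :=
        Real.rpow_le_rpow_of_nonpos (by linarith) h5 hb0.le
      have h7 : ((x+r)/3 : ℝ) ^ b ≤ 3 * (x+r) ^ b := by
        rw [Real.div_rpow hT.le (by norm_num : (0:ℝ) ≤ 3) b]
        rw [div_le_iff₀ (Real.rpow_pos_of_pos (by norm_num) b)]
        have h8 : (1:ℝ) ≤ 3 * 3 ^ b := by
          have : (3:ℝ) ^ (b+1) = 3 * 3 ^ b := by
            rw [Real.rpow_add (by norm_num : (0:ℝ) < 3), Real.rpow_one]; ring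
          have h9 : (1:ℝ) ≤ 3 ^ (b+1) :=
            Real.one_le_rpow (by norm_num) (by linarith)
          linarith [this ▸ h9]
        nlinarith
      have hmb : (0:ℝ) ≤ m ^ b := Real.rpow_nonneg hm0 _
      have h10 : m ^ b * ((x+r) - m) ≤ (3 * (x+r) ^ b) * (2 * r) := by
        apply mul_le_mul (h6.trans h7) hlen (by linarith [hmx]) (by positivity)
      calc ∫ t in Set.Ioo m (x+r), t ^ b ≤ m ^ b * ((x+r) - m) := key
        _ ≤ (3 * (x+r) ^ b) * (2 * r) := h10
        _ = 6 * (r * (x+r) ^ b) := by ring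
        _ ≤ (max 2 (6 + 3/(b+1))) * (r * (x+r) ^ b) := by
            apply mul_le_mul_of_nonneg_right _ h4
            have : (0:ℝ) < 3/(b+1) := by positivity
            linarith

lemma bessel_key_alg (b x r R : ℝ) (hx : 0 ≤ x) (hr : 0 < r) (hrR : r ≤ R) :
    (R/r) ^ (1+b) * (r * (x+r) ^ b) = R * ((R/r*(x+r)) ^ b) := by
  have hR : 0 < R := lt_of_lt_of_le hr hrR
  have hRr : 0 < R/r := div_pos hR hr
  have h1 : (R/r) * r = R := div_mul_cancel₀ R hr.ne'
  calc (R/r) ^ (1+b) * (r * (x+r) ^ b)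
      = ((R/r)*r) * ((R/r) ^ b * (x+r) ^ b) := by
        rw [Real.rpow_add hRr, Real.rpow_one]; ring
    _ = R * ((R/r*(x+r)) ^ b) := by
        rw [h1, ← Real.mul_rpow hRr.le (by linarith : (0:ℝ) ≤ x+r)]

lemma bessel_key_ge (b x r R : ℝ) (hx : 0 ≤ x) (hr : 0 < r) (hrR : r ≤ R) :
    x + R ≤ R/r*(x+r) := by
  rw [div_mul_eq_mul_div, le_div_iff₀ hr]
  nlinarith [mul_nonneg hx (sub_nonneg.2 hrR)]

/-- For `λ ∈ (−1/2,∞)`, `x ≥ 0` and `0 < r ≤ R`, the one-dimensional Bessel measure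
`t^{2λ} dt` satisfies `(R/r)^{1−2λ₋} ≲ μ_λ(B(x,R))/μ_λ(B(x,r)) ≲ (R/r)^{1+2λ₊}`,
with constants depending only on `λ`. -/
theorem bessel_dimension_bounds (lam : ℝ) (hlam : -1/2 < lam) :
    ∃ c C : ℝ, 0 < c ∧ 0 < C ∧ ∀ x r R : ℝ, 0 ≤ x → 0 < r → r ≤ R →
      (c * (R / r) ^ (1 - 2 * max (-lam) 0) *
          ∫ t in Set.Ioo (max (x - r) 0) (x + r), t ^ (2 * lam) ≤
        ∫ t in Set.Ioo (max (x - R) 0) (x + R), t ^ (2 * lam)) ∧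
      ((∫ t in Set.Ioo (max (x - R) 0) (x + R), t ^ (2 * lam)) ≤
        C * (R / r) ^ (1 + 2 * max lam 0) *
          ∫ t in Set.Ioo (max (x - r) 0) (x + r), t ^ (2 * lam)) := by
  set b := 2 * lam with hbdef
  have hb : -1 < b := by simp only [hbdef]; linarith
  have hb1 : (0:ℝ) < b + 1 := by linarith
  set c₁ : ℝ := (2:ℝ) ^ (-(b+1)) with hc₁
  set C₂ : ℝ := max 2 (6 + 3/(b+1)) with hC₂
  have hc₁pos : 0 < c₁ := Real.rpow_pos_of_pos (by norm_num) _
  have hC₂pos : 0 < C₂ := lt_of_lt_of_le (by norm_num) (le_max_left _ _)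
  refine ⟨c₁ / C₂, C₂ / c₁, div_pos hc₁pos hC₂pos, div_pos hC₂pos hc₁pos, ?_⟩
  intro x r R hx hr hrR
  have hR : 0 < R := lt_of_lt_of_le hr hrR
  have hRr : 0 < R / r := div_pos hR hr
  have hxr : 0 < x + r := by linarith
  have hxR : 0 < x + R := by linarith
  have hxrb : (0:ℝ) ≤ (x+r) ^ b := Real.rpow_nonneg hxr.le _
  have lowR := bessel_low b x R hb hx hR
  have upR := bessel_up b x R hb hx hR
  have lowr := bessel_low b x r hb hx hr
  have upr := bessel_up b x r hb hx hr
  have hge := bessel_key_ge b x r R hx hr hrR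
  constructor
  · -- lower bound
    have key : (R/r) ^ (1 - 2 * max (-lam) 0) * (r * (x+r) ^ b) ≤ R * (x+R) ^ b := by
      rcases le_total 0 lam with h | h
      · rw [max_eq_right (neg_nonpos.mpr h)]
        have : (1 - 2*(0:ℝ)) = 1 := by norm_num
        rw [this, Real.rpow_one]
        have h2 : (x+r) ^ b ≤ (x+R) ^ b :=
          Real.rpow_le_rpow hxr.le (by linarith) (by simp only [hbdef]; linarith)
        calc (R/r) * (r * (x+r) ^ b) = R * (x+r) ^ b := by
              field_simp
          _ ≤ R * (x+R) ^ b := mul_le_mul_of_nonneg_left h2 hR.le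
      · rw [max_eq_left (by linarith : (0:ℝ) ≤ -lam)]
        have he : 1 - 2 * -lam = 1 + b := by simp only [hbdef]; ring
        rw [he, bessel_key_alg b x r R hx hr hrR]
        have h2 : (R/r*(x+r)) ^ b ≤ (x+R) ^ b :=
          Real.rpow_le_rpow_of_nonpos hxR hge (by simp only [hbdef]; linarith)
        exact mul_le_mul_of_nonneg_left h2 hR.le
    calc c₁ / C₂ * (R / r) ^ (1 - 2 * max (-lam) 0) *
            ∫ t in Set.Ioo (max (x - r) 0) (x + r), t ^ b
        ≤ c₁ / C₂ * (R / r) ^ (1 - 2 * max (-lam) 0) * (C₂ * (r * (x+r) ^ b)) := by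
          apply mul_le_mul_of_nonneg_left upr
          positivity
      _ = c₁ * ((R/r) ^ (1 - 2 * max (-lam) 0) * (r * (x+r) ^ b)) := by
          field_simp
      _ ≤ c₁ * (R * (x+R) ^ b) := mul_le_mul_of_nonneg_left key hc₁pos.le
      _ ≤ ∫ t in Set.Ioo (max (x - R) 0) (x + R), t ^ b := lowR
  · -- upper bound
    have key : R * (x+R) ^ b ≤ (R/r) ^ (1 + 2 * max lam 0) * (r * (x+r) ^ b) := by
      rcases le_total lam 0 with h | h
      · rw [max_eq_right h]
        have : (1 + 2*(0:ℝ)) = 1 := by norm_num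
        rw [this, Real.rpow_one]
        have h2 : (x+R) ^ b ≤ (x+r) ^ b :=
          Real.rpow_le_rpow_of_nonpos hxr (by linarith) (by simp only [hbdef]; linarith)
        calc R * (x+R) ^ b ≤ R * (x+r) ^ b := mul_le_mul_of_nonneg_left h2 hR.le
          _ = (R/r) * (r * (x+r) ^ b) := by field_simp
      · rw [max_eq_left h]
        have he : 1 + 2 * lam = 1 + b := by simp only [hbdef]
        rw [he, bessel_key_alg b x r R hx hr hrR]
        have h2 : (x+R) ^ b ≤ (R/r*(x+r)) ^ b :=
          Real.rpow_le_rpow hxR.le hge (by simp only [hbdef]; linarith)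
        exact mul_le_mul_of_nonneg_left h2 hR.le
    calc ∫ t in Set.Ioo (max (x - R) 0) (x + R), t ^ b
        ≤ C₂ * (R * (x+R) ^ b) := upR
      _ ≤ C₂ * ((R/r) ^ (1 + 2 * max lam 0) * (r * (x+r) ^ b)) :=
          mul_le_mul_of_nonneg_left key hC₂pos.le
      _ = C₂ / c₁ * (R / r) ^ (1 + 2 * max lam 0) * (c₁ * (r * (x+r) ^ b)) := by
          field_simp
      _ ≤ C₂ / c₁ * (R / r) ^ (1 + 2 * max lam 0) *
            ∫ t in Set.Ioo (max (x - r) 0) (x + r), t ^ b := by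
          apply mul_le_mul_of_nonneg_left lowr
          positivity
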